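/- For the norms |||·|||_ν and ‖·‖_{ν:2ν} defined via the spectral measure of T*T, one has (1/√2)·|||x|||_ν ≤ ‖x‖_{ν:2ν} ≤ √2·|||x|||_ν for all x and all ν > 0; hence the spaces X_{ν:2ν} and 𝕏_ν coincide with norm equivalence uniform in ν. -/

import Mathlib

open MeasureTheory Set ENNReal

/-- `(1/√2)|||x|||_ν ≤ ‖x‖_{ν:2ν} ≤ √2 |||x|||_ν` (squared form), for all `ν > 0`
and all `x` (spectral measure modelled by a finite Borel measure `μ` on `[0,∞)`);
hence `X_{ν:2ν} = 𝕏_ν` with norm equivalence uniform in `ν`. -/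
theorem stmt11 (μ : Measure ℝ) [IsFiniteMeasure μ] (hsupp : μ (Iio 0) = 0)
    (ν : ℝ) (hν : 0 < ν) :
    (2 : ℝ≥0∞)⁻¹ * (⨆ t ∈ Ioi (0:ℝ), ENNReal.ofReal (t ^ (-(2*ν))) * μ (Ico 0 t))
      ≤ (⨆ t ∈ Ioi (0:ℝ), ENNReal.ofReal (t ^ (-(2*ν/(2*ν)))) *
          ∫⁻ l, ENNReal.ofReal (t ^ 2 / (t ^ 2 + l ^ (2*(2*ν)))) ∂μ) ∧
    (⨆ t ∈ Ioi (0:ℝ), ENNReal.ofReal (t ^ (-(2*ν/(2*ν)))) *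
        ∫⁻ l, ENNReal.ofReal (t ^ 2 / (t ^ 2 + l ^ (2*(2*ν)))) ∂μ)
      ≤ 2 * (⨆ t ∈ Ioi (0:ℝ), ENNReal.ofReal (t ^ (-(2*ν))) * μ (Ico 0 t)) := by
  have hν2 : (0:ℝ) < 2*ν := by linarith
  have hν4 : (0:ℝ) < 2*(2*ν) := by linarith
  have hexp : -(2*ν/(2*ν)) = (-1 : ℝ) := by
    rw [div_self (ne_of_gt hν2)]
  set c : ℝ := 2*(2*ν) with hc
  set A : ℝ≥0∞ := ⨆ t ∈ Ioi (0:ℝ), ENNReal.ofReal (t ^ (-(2*ν))) * μ (Ico 0 t) with hA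
  set B : ℝ≥0∞ := ⨆ t ∈ Ioi (0:ℝ), ENNReal.ofReal (t ^ (-(2*ν/(2*ν)))) *
      ∫⁻ l, ENNReal.ofReal (t ^ 2 / (t ^ 2 + l ^ c)) ∂μ with hB
  have h12 : ENNReal.ofReal (1/2 : ℝ) = (2:ℝ≥0∞)⁻¹ := by
    rw [one_div, ENNReal.ofReal_inv_of_pos (by norm_num), ENNReal.ofReal_ofNat]
  have h2top : (2:ℝ≥0∞) ≠ ⊤ := by norm_num
  -- LOWER BOUND: A ≤ 2 * B
  have lower : A ≤ 2 * B := by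
    refine iSup₂_le fun s hs => ?_
    have hs : (0:ℝ) < s := hs
    set t : ℝ := s ^ (2*ν) with ht
    have htpos : 0 < t := Real.rpow_pos_of_pos hs _
    have hts : s ^ c = t ^ 2 := by
      rw [ht, ← Real.rpow_natCast (s ^ (2*ν)) 2, ← Real.rpow_mul hs.le]
      congr 1
      rw [hc]; push_cast; ring
    have hIco : ENNReal.ofReal (1/2 : ℝ) * μ (Ico 0 s)
        ≤ ∫⁻ l, ENNReal.ofReal (t ^ 2 / (t ^ 2 + l ^ c)) ∂μ := by
      calc ENNReal.ofReal (1/2 : ℝ) * μ (Ico 0 s)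
          = ∫⁻ _ in Ico (0:ℝ) s, ENNReal.ofReal (1/2 : ℝ) ∂μ :=
            (setLIntegral_const _ _).symm
        _ ≤ ∫⁻ l in Ico (0:ℝ) s, ENNReal.ofReal (t ^ 2 / (t ^ 2 + l ^ c)) ∂μ := by
            refine setLIntegral_mono' measurableSet_Ico fun l hl => ?_
            refine ENNReal.ofReal_le_ofReal ?_
            have hlc0 : 0 ≤ l ^ c := Real.rpow_nonneg hl.1 _
            have hlc : l ^ c ≤ t ^ 2 := by
              rw [← hts]
              exact Real.rpow_le_rpow hl.1 hl.2.le hν4.le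
            have hD : 0 < t ^ 2 + l ^ c := by positivity
            rw [le_div_iff₀ hD]
            nlinarith [sq_nonneg t]
        _ ≤ ∫⁻ l, ENNReal.ofReal (t ^ 2 / (t ^ 2 + l ^ c)) ∂μ :=
            setLIntegral_le_lintegral _ _
    have hBt : ENNReal.ofReal (t ^ (-(2*ν/(2*ν)))) *
        ∫⁻ l, ENNReal.ofReal (t ^ 2 / (t ^ 2 + l ^ c)) ∂μ ≤ B := by
      rw [hB]
      exact le_iSup₂ (f := fun t (_ : t ∈ Ioi (0:ℝ)) => ENNReal.ofReal (t ^ (-(2*ν/(2*ν)))) *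
        ∫⁻ l, ENNReal.ofReal (t ^ 2 / (t ^ 2 + l ^ c)) ∂μ) t htpos
    have he : ENNReal.ofReal (t ^ (-(2*ν/(2*ν)))) = ENNReal.ofReal (s ^ (-(2*ν))) := by
      rw [hexp, Real.rpow_neg_one, Real.rpow_neg hs.le]
    have hone : (2:ℝ≥0∞) * ENNReal.ofReal (1/2 : ℝ) = 1 := by
      rw [h12, ENNReal.mul_inv_cancel two_ne_zero h2top]
    calc ENNReal.ofReal (s ^ (-(2*ν))) * μ (Ico 0 s)
        = (2 * ENNReal.ofReal (1/2 : ℝ)) *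
            (ENNReal.ofReal (s ^ (-(2*ν))) * μ (Ico 0 s)) := by rw [hone, one_mul]
      _ = 2 * (ENNReal.ofReal (s ^ (-(2*ν))) *
            (ENNReal.ofReal (1/2 : ℝ) * μ (Ico 0 s))) := by ring
      _ ≤ 2 * (ENNReal.ofReal (s ^ (-(2*ν))) *
            ∫⁻ l, ENNReal.ofReal (t ^ 2 / (t ^ 2 + l ^ c)) ∂μ) := by
          exact mul_le_mul_right (mul_le_mul_right hIco _) 2
      _ = 2 * (ENNReal.ofReal (t ^ (-(2*ν/(2*ν)))) *
            ∫⁻ l, ENNReal.ofReal (t ^ 2 / (t ^ 2 + l ^ c)) ∂μ) := by rw [he]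
      _ ≤ 2 * B := mul_le_mul_right hBt 2
  -- UPPER BOUND key: for each t > 0, the integral is ≤ 2 * ofReal t * A
  have key : ∀ t : ℝ, 0 < t →
      (∫⁻ l, ENNReal.ofReal (t ^ 2 / (t ^ 2 + l ^ c)) ∂μ)
        ≤ 2 * ENNReal.ofReal t * A := by
    intro t htpos
    have ht2 : (0:ℝ) < t ^ 2 := by positivity
    have hae0 : ∀ᵐ l ∂μ, 0 ≤ l := by
      rw [ae_iff]
      convert hsupp using 2
      ext l; simp [Iio, not_le]
    have f_nn : 0 ≤ᵐ[μ] fun l => t ^ 2 / (t ^ 2 + l ^ c) := by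
      filter_upwards [hae0] with l hl
      have : 0 ≤ l ^ c := Real.rpow_nonneg hl _
      positivity
    have f_mble : AEMeasurable (fun l => t ^ 2 / (t ^ 2 + l ^ c)) μ := by
      refine (Measurable.div measurable_const ?_).aemeasurable
      exact measurable_const.add (Real.continuous_rpow_const hν4.le).measurable
    rw [lintegral_eq_lintegral_meas_lt μ f_nn f_mble]
    -- split the outer integral at 1
    have hsplit : Ioi (0:ℝ) = Ioo 0 1 ∪ Ici 1 := (Ioo_union_Ici_eq_Ioi zero_lt_one).symm
    have hIci : ∫⁻ u in Ici (1:ℝ), μ {l : ℝ | u < t ^ 2 / (t ^ 2 + l ^ c)} = 0 := by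
      have hz : ∀ u ∈ Ici (1:ℝ), μ {l : ℝ | u < t ^ 2 / (t ^ 2 + l ^ c)} = (0:ℝ≥0∞) := by
        intro u hu
        have hu : (1:ℝ) ≤ u := hu
        refine le_antisymm (le_trans (measure_mono ?_) hsupp.le) (zero_le)
        intro l hl
        by_contra hl0
        have hl0 : (0:ℝ) ≤ l := not_lt.mp (fun h => hl0 h)
        have hlc : 0 ≤ l ^ c := Real.rpow_nonneg hl0 _
        have : t ^ 2 / (t ^ 2 + l ^ c) ≤ 1 := by
          rw [div_le_one (by positivity)]; linarith
        exact absurd (lt_of_le_of_lt hu hl) (not_lt.mpr this)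
      calc ∫⁻ u in Ici (1:ℝ), μ {l : ℝ | u < t ^ 2 / (t ^ 2 + l ^ c)}
          = ∫⁻ _ in Ici (1:ℝ), (0:ℝ≥0∞) :=
            setLIntegral_congr_fun measurableSet_Ici hz
        _ = 0 := lintegral_zero
    have hIoo : ∫⁻ u in Ioo (0:ℝ) 1, μ {l : ℝ | u < t ^ 2 / (t ^ 2 + l ^ c)}
        ≤ 2 * ENNReal.ofReal t * A := by
      have hbound : ∀ u ∈ Ioo (0:ℝ) 1,
          μ {l : ℝ | u < t ^ 2 / (t ^ 2 + l ^ c)}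
            ≤ A * ENNReal.ofReal t * ENNReal.ofReal (u ^ (-(1/2) : ℝ)) := by
        intro u hu
        obtain ⟨hu0, hu1⟩ := hu
        set c0 : ℝ := t ^ 2 * (1 - u) / u with hc0def
        have hc0 : 0 < c0 := by
          apply div_pos _ hu0
          apply mul_pos ht2
          linarith
        set r : ℝ := c0 ^ (c⁻¹) with hrdef
        have hr : 0 < r := Real.rpow_pos_of_pos hc0 _
        have hsub : {l : ℝ | u < t ^ 2 / (t ^ 2 + l ^ c)} ⊆ Iio 0 ∪ Ico 0 r := by
          intro l hl
          rcases lt_or_ge l 0 with h | h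
          · exact Or.inl h
          · refine Or.inr ⟨h, ?_⟩
            have hlc : 0 ≤ l ^ c := Real.rpow_nonneg h _
            have hD : 0 < t ^ 2 + l ^ c := by positivity
            have hl' : u * (t ^ 2 + l ^ c) < t ^ 2 := (lt_div_iff₀ hD).mp hl
            have hlc0 : l ^ c < c0 := by
              rw [hc0def, lt_div_iff₀ hu0]
              nlinarith
            have : (l ^ c) ^ (c⁻¹) < c0 ^ (c⁻¹) :=
              Real.rpow_lt_rpow hlc hlc0 (by positivity)
            rwa [← Real.rpow_mul h, mul_inv_cancel₀ (ne_of_gt hν4), Real.rpow_one] at this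
        have hmeas : μ {l : ℝ | u < t ^ 2 / (t ^ 2 + l ^ c)} ≤ μ (Ico 0 r) := by
          calc μ {l : ℝ | u < t ^ 2 / (t ^ 2 + l ^ c)} ≤ μ (Iio 0 ∪ Ico 0 r) :=
              measure_mono hsub
            _ ≤ μ (Iio 0) + μ (Ico 0 r) := measure_union_le _ _
            _ = μ (Ico 0 r) := by rw [hsupp, zero_add]
        have hAr : ENNReal.ofReal (r ^ (-(2*ν))) * μ (Ico 0 r) ≤ A := by
          rw [hA]
          exact le_iSup₂ (f := fun t (_ : t ∈ Ioi (0:ℝ)) =>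
            ENNReal.ofReal (t ^ (-(2*ν))) * μ (Ico 0 t)) r hr
        have hcancel : ENNReal.ofReal (r ^ (2*ν)) * ENNReal.ofReal (r ^ (-(2*ν))) = 1 := by
          rw [← ENNReal.ofReal_mul (Real.rpow_nonneg hr.le _),
            ← Real.rpow_add hr, add_neg_cancel, Real.rpow_zero, ENNReal.ofReal_one]
        have hmu : μ (Ico 0 r) ≤ ENNReal.ofReal (r ^ (2*ν)) * A := by
          calc μ (Ico 0 r) = (ENNReal.ofReal (r ^ (2*ν)) * ENNReal.ofReal (r ^ (-(2*ν)))) *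
              μ (Ico 0 r) := by rw [hcancel, one_mul]
            _ = ENNReal.ofReal (r ^ (2*ν)) * (ENNReal.ofReal (r ^ (-(2*ν))) * μ (Ico 0 r)) := by
              ring
            _ ≤ ENNReal.ofReal (r ^ (2*ν)) * A := mul_le_mul_right hAr _
        have hr2ν : r ^ (2*ν) ≤ t * u ^ (-(1/2) : ℝ) := by
          have h1 : r ^ (2*ν) = c0 ^ ((1:ℝ)/2) := by
            rw [hrdef, ← Real.rpow_mul hc0.le]
            congr 1
            field_simp [hc]
            ring
          have h2 : c0 ≤ t ^ 2 / u := by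
            rw [hc0def, div_le_div_iff₀ hu0 hu0]
            nlinarith [mul_pos ht2 (mul_pos hu0 hu0)]
          have h3 : c0 ^ ((1:ℝ)/2) ≤ (t ^ 2 / u) ^ ((1:ℝ)/2) :=
            Real.rpow_le_rpow hc0.le h2 (by norm_num)
          have h4 : (t ^ 2 / u) ^ ((1:ℝ)/2) = t * u ^ (-(1/2) : ℝ) := by
            rw [div_eq_mul_inv, Real.mul_rpow (by positivity) (by positivity),
              Real.inv_rpow hu0.le, ← Real.rpow_neg hu0.le]
            congr 1
            rw [show (t:ℝ)^2 = t ^ (2:ℝ) by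
                rw [show ((2:ℝ)) = ((2:ℕ):ℝ) by norm_num, Real.rpow_natCast],
              ← Real.rpow_mul htpos.le]
            norm_num
          rw [h1]
          exact h3.trans (le_of_eq h4)
        calc μ {l : ℝ | u < t ^ 2 / (t ^ 2 + l ^ c)} ≤ μ (Ico 0 r) := hmeas
          _ ≤ ENNReal.ofReal (r ^ (2*ν)) * A := hmu
          _ ≤ ENNReal.ofReal (t * u ^ (-(1/2) : ℝ)) * A :=
              mul_le_mul_left (ENNReal.ofReal_le_ofReal hr2ν) _
          _ = A * ENNReal.ofReal t * ENNReal.ofReal (u ^ (-(1/2) : ℝ)) := by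
              rw [ENNReal.ofReal_mul htpos.le]; ring
      calc ∫⁻ u in Ioo (0:ℝ) 1, μ {l : ℝ | u < t ^ 2 / (t ^ 2 + l ^ c)}
          ≤ ∫⁻ u in Ioo (0:ℝ) 1,
              A * ENNReal.ofReal t * ENNReal.ofReal (u ^ (-(1/2) : ℝ)) := by
            refine setLIntegral_mono' measurableSet_Ioo hbound
        _ = A * ENNReal.ofReal t *
              ∫⁻ u in Ioo (0:ℝ) 1, ENNReal.ofReal (u ^ (-(1/2) : ℝ)) := by
            refine lintegral_const_mul _ ?_
            refine ENNReal.measurable_ofReal.comp ?_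
            refine measurable_of_continuousOn_compl_singleton (0:ℝ) ?_
            exact continuousOn_of_forall_continuousAt fun x hx =>
              Real.continuousAt_rpow_const x _ (Or.inl hx)
        _ = A * ENNReal.ofReal t * ENNReal.ofReal 2 := by
            congr 1
            have hint : IntervalIntegrable (fun u : ℝ => u ^ (-(1/2) : ℝ)) volume 0 1 :=
              intervalIntegral.intervalIntegrable_rpow' (by norm_num)
            have hint' : IntegrableOn (fun u : ℝ => u ^ (-(1/2) : ℝ)) (Ioo 0 1) volume := by
              have := (intervalIntegrable_iff_integrableOn_Ioc_of_le zero_le_one).mp hint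
              exact this.mono_set Ioo_subset_Ioc_self
            have hnn : 0 ≤ᵐ[volume.restrict (Ioo (0:ℝ) 1)]
                fun u : ℝ => u ^ (-(1/2) : ℝ) := by
              filter_upwards [ae_restrict_mem measurableSet_Ioo] with u hu
              exact Real.rpow_nonneg hu.1.le _
            rw [← ofReal_integral_eq_lintegral_ofReal hint' hnn]
            congr 1
            rw [← integral_Ioc_eq_integral_Ioo, ← intervalIntegral.integral_of_le zero_le_one,
              integral_rpow (Or.inl (by norm_num))]
            rw [show (-(1/2) + 1 : ℝ) = 1/2 by norm_num, Real.one_rpow,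
              Real.zero_rpow (by norm_num)]
            norm_num
        _ = 2 * ENNReal.ofReal t * A := by
            rw [show ENNReal.ofReal (2:ℝ) = (2:ℝ≥0∞) by
              rw [ENNReal.ofReal_ofNat]]
            ring
    calc ∫⁻ u in Ioi (0:ℝ), μ {l : ℝ | u < t ^ 2 / (t ^ 2 + l ^ c)}
        = ∫⁻ u in Ioo (0:ℝ) 1 ∪ Ici 1, μ {l : ℝ | u < t ^ 2 / (t ^ 2 + l ^ c)} := by
          rw [← hsplit]
      _ ≤ (∫⁻ u in Ioo (0:ℝ) 1, μ {l : ℝ | u < t ^ 2 / (t ^ 2 + l ^ c)}) +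
            ∫⁻ u in Ici (1:ℝ), μ {l : ℝ | u < t ^ 2 / (t ^ 2 + l ^ c)} :=
          lintegral_union_le _ _ _
      _ ≤ 2 * ENNReal.ofReal t * A + 0 := by rw [hIci]; exact add_le_add hIoo le_rfl
      _ = 2 * ENNReal.ofReal t * A := by rw [add_zero]
  -- UPPER BOUND: B ≤ 2 * A
  have upper : B ≤ 2 * A := by
    refine iSup₂_le fun t ht => ?_
    have ht : (0:ℝ) < t := ht
    have hinv : ENNReal.ofReal (t ^ (-(2*ν/(2*ν)))) * ENNReal.ofReal t = 1 := by
      rw [hexp, Real.rpow_neg_one, ← ENNReal.ofReal_mul (by positivity),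
        inv_mul_cancel₀ (ne_of_gt ht), ENNReal.ofReal_one]
    calc ENNReal.ofReal (t ^ (-(2*ν/(2*ν)))) *
          ∫⁻ l, ENNReal.ofReal (t ^ 2 / (t ^ 2 + l ^ c)) ∂μ
        ≤ ENNReal.ofReal (t ^ (-(2*ν/(2*ν)))) * (2 * ENNReal.ofReal t * A) :=
          mul_le_mul_right (key t ht) _
      _ = (ENNReal.ofReal (t ^ (-(2*ν/(2*ν)))) * ENNReal.ofReal t) * (2 * A) := by ring
      _ = 2 * A := by rw [hinv, one_mul]
  refine ⟨?_, upper⟩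
  calc (2:ℝ≥0∞)⁻¹ * A ≤ (2:ℝ≥0∞)⁻¹ * (2 * B) := mul_le_mul_right lower _
    _ = B := by rw [← mul_assoc, ENNReal.inv_mul_cancel two_ne_zero h2top, one_mul]
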